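/- arXiv:1704.02847 — 7 statements merged into one kernel-verified Lean document; each statement's English description precedes it below -/
import Mathlib

section
/- Let (W,≼) be a poset and S:W→W a function that is NOT forward confluent (i.e., there exist w ≼ v with S(w) ⋠ S(v)). Then there exists a monotone valuation V on W and a formula φ (namely ○p for a propositional variable p) such that ⟦φ⟧ is not upwards-closed under ≼. -/
inductive Fml (P : Type) : Type
  | var (p : P)
  | bot
  | and (φ ψ : Fml P)
  | or (φ ψ : Fml P)
  | impl (φ ψ : Fml P)
  | next (φ : Fml P)
  | dia (φ : Fml P)
  | box (φ : Fml P)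

def Fml.neg {P : Type} (φ : Fml P) : Fml P := Fml.impl φ Fml.bot

/-- Intuitionistic temporal satisfaction over an explicit order `le`
    and successor function `S`. -/
def sat {P W : Type} (le : W → W → Prop) (S : W → W) (V : W → P → Prop) :
    Fml P → W → Prop
  | .var p, w => V w p
  | .bot, _ => False
  | .and φ ψ, w => sat le S V φ w ∧ sat le S V ψ w
  | .or φ ψ, w => sat le S V φ w ∨ sat le S V ψ w
  | .impl φ ψ, w => ∀ v, le w v → sat le S V φ v → sat le S V ψ v
  | .next φ, w => sat le S V φ (S w)
  | .dia φ, w => ∃ k : ℕ, sat le S V φ (S^[k] w)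
  | .box φ, w => ∀ k : ℕ, sat le S V φ (S^[k] w)

/-- If `S` is not forward confluent, then there is a monotone valuation `V`
    such that the extension of `○p` is not upwards-closed. -/
theorem not_confluent_not_upwards_closed {W P : Type} (le : W → W → Prop) (S : W → W)
    (hrefl : ∀ w, le w w)
    (htrans : ∀ a b c, le a b → le b c → le a c)
    (hantisymm : ∀ a b, le a b → le b a → a = b)
    (p : P)
    (hnc : ∃ w v, le w v ∧ ¬ le (S w) (S v)) :
    ∃ V : W → P → Prop,
      (∀ w v, le w v → ∀ q, V w q → V v q) ∧
      ¬ (∀ w v, le w v → sat le S V (Fml.next (Fml.var p)) w →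
            sat le S V (Fml.next (Fml.var p)) v) := by
  obtain ⟨w, v, hwv, hns⟩ := hnc
  refine ⟨fun x _ => le (S w) x, fun a b hab q hq => htrans _ _ _ hq hab, fun h => ?_⟩
  exact hns (h w v hwv (hrefl (S w)))
end

section
/- The formula ¬¬◇□p → ◇¬¬□p is not valid over the class of persistent intuitionistic temporal models. Specifically, let W = ℤ ∪ {r} with r fresh, w ≼ v iff w = r or w = v, S(r) = r, S(n) = n+1 for n ∈ ℤ, and V(x) = {p} iff x ∈ ℤ and x ≥ 0 (else ∅). Then M is a persistent model, M,r ⊨ ¬¬◇□p, but M,r ⊭ ◇¬¬□p. -/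
/-- The order on `ℤ ∪ {r}` (with `none` playing the role of `r`):
    `x ≼ y` iff `x = r` or `x = y`. -/
def leZ : Option ℤ → Option ℤ → Prop := fun x y => x = none ∨ x = y

def SZ : Option ℤ → Option ℤ
  | none => none
  | some n => some (n + 1)

def VZ : Option ℤ → Unit → Prop := fun x _ => ∃ n : ℤ, x = some n ∧ 0 ≤ n

lemma SZ_iter_none (k : ℕ) : SZ^[k] none = none := by
  induction k with
  | zero => rfl
  | succ n ih => rw [Function.iterate_succ_apply', ih]; rfl

lemma SZ_iter_some (n : ℤ) (k : ℕ) : SZ^[k] (some n) = some (n + k) := by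
  induction k with
  | zero => simp
  | succ m ih => rw [Function.iterate_succ_apply', ih]; simp [SZ]; ring

/-- The model on `ℤ ∪ {r}` is persistent (forward and backward confluent,
    monotone valuation), satisfies `¬¬◇□p` at `r` but not `◇¬¬□p`; hence
    `¬¬◇□p → ◇¬¬□p` fails at `r`, so it is not valid over persistent models. -/
theorem not_valid_persistent :
    (∀ a b, leZ a b → leZ (SZ a) (SZ b)) ∧
    (∀ a b, leZ (SZ a) b → ∃ u, leZ a u ∧ SZ u = b) ∧
    (∀ a b, leZ a b → ∀ q, VZ a q → VZ b q) ∧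
    sat leZ SZ VZ (Fml.neg (Fml.neg (Fml.dia (Fml.box (Fml.var ()))))) none ∧
    ¬ sat leZ SZ VZ (Fml.dia (Fml.neg (Fml.neg (Fml.box (Fml.var ()))))) none ∧
    ¬ sat leZ SZ VZ
        (Fml.impl (Fml.neg (Fml.neg (Fml.dia (Fml.box (Fml.var ())))))
                  (Fml.dia (Fml.neg (Fml.neg (Fml.box (Fml.var ())))))) none := by
  have hdia : ∀ v : Option ℤ, ∃ u, leZ v u ∧ sat leZ SZ VZ (Fml.dia (Fml.box (Fml.var ()))) u := by
    intro v
    match v with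
    | none =>
      refine ⟨some 0, Or.inl rfl, 0, ?_⟩
      intro k
      simp only [sat, SZ_iter_some]
      exact ⟨(0 : ℤ) + k, rfl, by positivity⟩
    | some n =>
      refine ⟨some n, Or.inr rfl, n.natAbs, ?_⟩
      intro k
      simp only [sat, SZ_iter_some]
      refine ⟨n + n.natAbs + k, rfl, ?_⟩
      have := Int.natAbs_eq n
      omega
  have H4 : sat leZ SZ VZ (Fml.neg (Fml.neg (Fml.dia (Fml.box (Fml.var ()))))) none := by
    intro v _ hv
    obtain ⟨u, hle, hu⟩ := hdia v
    exact hv u hle hu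
  have H5 : ¬ sat leZ SZ VZ (Fml.dia (Fml.neg (Fml.neg (Fml.box (Fml.var ()))))) none := by
    rintro ⟨k, hk⟩
    rw [SZ_iter_none] at hk
    refine hk (some (-1)) (Or.inl rfl) ?_
    intro u hu hbox
    have hu' : u = some (-1) := by
      rcases hu with h | h
      · exact absurd h (by simp)
      · exact h.symm
    subst hu'
    have := hbox 0
    simp only [sat, Function.iterate_zero_apply] at this
    obtain ⟨m, hm, hm0⟩ := this
    simp at hm; omega
  refine ⟨?_, ?_, ?_, H4, H5, ?_⟩
  · rintro a b (rfl | rfl)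
    · exact Or.inl rfl
    · exact Or.inr rfl
  · rintro a b (h | rfl)
    · match a with
      | none =>
        match b with
        | none => exact ⟨none, Or.inl rfl, rfl⟩
        | some m => exact ⟨some (m - 1), Or.inl rfl, by simp [SZ]⟩
      | some n => simp [SZ] at h
    · exact ⟨a, Or.inr rfl, rfl⟩
  · rintro a b (rfl | rfl) q ⟨n, hn, hn0⟩
    · simp at hn
    · exact ⟨n, hn, hn0⟩
  · intro h
    exact H5 (h none (Or.inl rfl) H4)
end

section
/- The model M with W = ℤ ∪ {r}, w ≼ v iff w = r or w = v, S(r) = r, S(n) = n+1 for n ∈ ℤ, is a persistent model: S is both forward confluent and backward confluent with respect to ≼. -/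
/-- `leZ` is a partial order and `SZ` is both forward and backward confluent,
    i.e. the model on `ℤ ∪ {r}` is persistent. -/
theorem leZ_SZ_persistent :
    (∀ x, leZ x x) ∧
    (∀ a b c, leZ a b → leZ b c → leZ a c) ∧
    (∀ a b, leZ a b → leZ b a → a = b) ∧
    (∀ a b, leZ a b → leZ (SZ a) (SZ b)) ∧
    (∀ a b, leZ (SZ a) b → ∃ u, leZ a u ∧ SZ u = b) := by
  refine ⟨fun x => Or.inr rfl, ?_, ?_, ?_, ?_⟩
  · rintro a b c (rfl|rfl) h
    · exact Or.inl rfl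
    · exact h
  · rintro a b (rfl|rfl) (h|h) <;> simp_all
  · rintro a b (rfl|rfl)
    · exact Or.inl rfl
    · exact Or.inr rfl
  · rintro (_|n) b h
    · rcases b with _|m
      · exact ⟨none, Or.inl rfl, rfl⟩
      · exact ⟨some (m - 1), Or.inl rfl, by simp [SZ]⟩
    · rcases h with h|h
      · simp [SZ] at h
      · exact ⟨some n, Or.inr rfl, h⟩
end

section
/- The formula ¬¬◇□p → ◇¬¬□p is valid over the class of finite persistent models: for every finite persistent model M = (W,≼,S,V) and every w ∈ W, if M,w ⊨ ¬¬◇□p then M,w ⊨ ◇¬¬□p. -/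
private lemma bc_iter {W : Type} (le : W → W → Prop) (S : W → W)
    (hbc : ∀ a b, le (S a) b → ∃ u, le a u ∧ S u = b) :
    ∀ k a b, le (S^[k] a) b → ∃ u, le a u ∧ S^[k] u = b := by
  intro k
  induction k with
  | zero => intro a b hab; exact ⟨b, hab, rfl⟩
  | succ n ih =>
    intro a b hab
    rw [Function.iterate_succ_apply'] at hab
    obtain ⟨u1, hu1, hSu1⟩ := hbc _ _ hab
    obtain ⟨u, hu, hSu⟩ := ih a u1 hu1
    exact ⟨u, hu, by rw [Function.iterate_succ_apply', hSu, hSu1]⟩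

private lemma fc_iter {W : Type} (le : W → W → Prop) (S : W → W)
    (hfc : ∀ a b, le a b → le (S a) (S b)) :
    ∀ k a b, le a b → le (S^[k] a) (S^[k] b) := by
  intro k
  induction k with
  | zero => intro a b hab; exact hab
  | succ n ih =>
    intro a b hab
    rw [Function.iterate_succ_apply', Function.iterate_succ_apply']
    exact hfc _ _ (ih a b hab)

/-- `¬¬◇□p → ◇¬¬□p` is valid over the class of finite persistent models. -/
theorem valid_finite_persistent {P W : Type} [Finite W] [Nonempty W]
    (le : W → W → Prop) (S : W → W) (V : W → P → Prop)
    (hrefl : ∀ w, le w w)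
    (htrans : ∀ a b c, le a b → le b c → le a c)
    (hantisymm : ∀ a b, le a b → le b a → a = b)
    (hV : ∀ w v, le w v → ∀ q, V w q → V v q)
    (hfc : ∀ a b, le a b → le (S a) (S b))
    (hbc : ∀ a b, le (S a) b → ∃ u, le a u ∧ S u = b)
    (p : P) (w : W)
    (h : sat le S V (Fml.neg (Fml.neg (Fml.dia (Fml.box (Fml.var p))))) w) :
    sat le S V (Fml.dia (Fml.neg (Fml.neg (Fml.box (Fml.var p))))) w := by
  classical
  haveI := Fintype.ofFinite W
  -- From `h`: every v ≽ w has some u ≽ v satisfying ◇□p.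
  have h' : ∀ v, le w v → ∃ u, le v u ∧
      ∃ m : ℕ, sat le S V (Fml.box (Fml.var p)) (S^[m] u) := by
    intro v hv
    by_contra hc
    push_neg at hc
    refine h v hv ?_
    intro u hu hd
    obtain ⟨m, hm⟩ := hd
    exact hc u hu m hm
  -- uniform bound on the ◇ witness
  let mf : W → ℕ := fun v =>
    if hv : le w v then (h' v hv).choose_spec.2.choose else 0
  let M : ℕ := Finset.univ.sup mf
  refine ⟨M, ?_⟩
  intro v' hv' hneg
  -- pull v' back through S^[M]
  obtain ⟨u, hu, hSu⟩ := bc_iter le S hbc M w v' hv'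
  have huw : le w u := htrans _ _ _ hu (hrefl u)
  set u' := (h' u hu).choose with hu'def
  have hu' : le u u' := (h' u hu).choose_spec.1
  set m := (h' u hu).choose_spec.2.choose with hmdef
  have hbox : sat le S V (Fml.box (Fml.var p)) (S^[m] u') :=
    (h' u hu).choose_spec.2.choose_spec
  have hmM : m ≤ M := by
    have : mf u = m := by simp only [mf, dif_pos hu, hmdef]
    calc m = mf u := this.symm
    _ ≤ M := Finset.le_sup (Finset.mem_univ u)
  -- the witness: S^[M] u'
  have hle : le v' (S^[M] u') := by
    have := fc_iter le S hfc M u u' hu'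
    rwa [hSu] at this
  refine hneg (S^[M] u') hle ?_
  intro k
  have : S^[k] (S^[M] u') = S^[k + (M - m)] (S^[m] u') := by
    rw [← Function.iterate_add_apply, ← Function.iterate_add_apply]
    congr 1
    omega
  show V (S^[k] (S^[M] u')) p
  rw [this]
  exact hbox (k + (M - m))
end

section
/- The logic ITL^p (validity over persistent models) does not have the finite model property: there is a formula, namely ¬¬◇□p → ◇¬¬□p, that is valid on all finite persistent models but not valid on all persistent models. -/
section Aux
variable {P W : Type} {le : W → W → Prop} {S : W → W} {V : W → P → Prop}

lemma iter_mono (fc : ∀ a b, le a b → le (S a) (S b)) :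
    ∀ (n : ℕ) {a b : W}, le a b → le (S^[n] a) (S^[n] b) := by
  intro n
  induction n with
  | zero => intro a b h; simpa using h
  | succ n ih =>
      intro a b h
      rw [Function.iterate_succ_apply', Function.iterate_succ_apply']
      exact fc _ _ (ih h)

lemma iter_back (bc : ∀ a b, le (S a) b → ∃ u, le a u ∧ S u = b) :
    ∀ (n : ℕ) {a b : W}, le (S^[n] a) b → ∃ u, le a u ∧ S^[n] u = b := by
  intro n
  induction n with
  | zero => intro a b h; exact ⟨b, by simpa using h, rfl⟩
  | succ n ih =>
      intro a b h
      rw [Function.iterate_succ_apply] at h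
      obtain ⟨u, hu, rfl⟩ := ih h
      obtain ⟨u', hu', rfl⟩ := bc _ _ hu
      exact ⟨u', hu', by rw [Function.iterate_succ_apply]⟩

lemma box_shift {φ : Fml P} {u : W} {m k : ℕ}
    (h : sat le S V (.box φ) (S^[m] u)) (hmk : m ≤ k) :
    sat le S V (.box φ) (S^[k] u) := by
  simp only [sat] at h ⊢
  intro j
  have := h (j + (k - m))
  rw [← Function.iterate_add_apply] at this
  have e : j + (k - m) + m = j + k := by omega
  rw [e, Function.iterate_add_apply] at this
  exact this

end Aux


theorem part1 : ∀ (W : Type) (le : W → W → Prop) (S : W → W) (V : W → Unit → Prop), Finite W →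
    (∀ w, le w w) → (∀ a b c, le a b → le b c → le a c) →
    (∀ a b, le a b → le b a → a = b) →
    (∀ a b, le a b → ∀ q, V a q → V b q) →
    (∀ a b, le a b → le (S a) (S b)) →
    (∀ a b, le (S a) b → ∃ u, le a u ∧ S u = b) →
    ∀ w, sat le S V (Fml.impl (Fml.neg (Fml.neg (Fml.dia (Fml.box (Fml.var ())))))
                (Fml.dia (Fml.neg (Fml.neg (Fml.box (Fml.var ())))))) w := by
  intro W le S V hfin _ _ _ _ hfc hbc w
  have hne : Nonempty W := ⟨w⟩
  intro v hv hA
  -- extract: above every x ≽ v there is a world satisfying ◇□p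
  have H : ∀ x, le v x → ∃ u m, le x u ∧ sat le S V (Fml.box (Fml.var ())) (S^[m] u) := by
    intro x hx
    by_contra hcon
    push_neg at hcon
    refine hA x hx (fun y hy hdy => ?_)
    obtain ⟨mm, hm⟩ := hdy
    exact hcon y mm hy hm
  have H' : ∀ x, ∃ u m, le v x → le x u ∧ sat le S V (Fml.box (Fml.var ())) (S^[m] u) := by
    intro x
    by_cases hx : le v x
    · obtain ⟨u, m, h1, h2⟩ := H x hx
      exact ⟨u, m, fun _ => ⟨h1, h2⟩⟩
    · exact ⟨x, 0, fun h => absurd h hx⟩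
  choose u m hum using H'
  obtain ⟨x₀, hx₀⟩ := Finite.exists_max m
  refine ⟨m x₀, fun b hb hnb => ?_⟩
  obtain ⟨x, hx, rfl⟩ := iter_back hbc (m x₀) hb
  obtain ⟨h1, h2⟩ := hum x hx
  exact hnb (S^[m x₀] (u x)) (iter_mono hfc (m x₀) h1) (box_shift h2 (hx₀ x))

/-- Labels for the countermodel: `none` is the root, `some (false, k)` are the
    "`p` never holds" branches, `some (true, m)` are points where `p` holds from time `m` on. -/
abbrev Lab := Option (Bool × ℕ)

def lle : Lab → Lab → Prop
  | none, _ => True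
  | some _, none => False
  | some x, some y => x = y ∨ (x.1 = false ∧ y.1 = true ∧ x.2 < y.2)

def le0 : Lab × ℕ → Lab × ℕ → Prop := fun a b => a.2 = b.2 ∧ lle a.1 b.1
def S0 : Lab × ℕ → Lab × ℕ := fun a => (a.1, a.2 + 1)
def V0 : Lab × ℕ → Unit → Prop := fun a _ => ∃ m, a.1 = some (true, m) ∧ m ≤ a.2

lemma S0_iter (k : ℕ) (a : Lab × ℕ) : S0^[k] a = (a.1, a.2 + k) := by
  induction k with
  | zero => simp
  | succ k ih => rw [Function.iterate_succ_apply', ih]; rfl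

lemma lle_refl (a : Lab) : lle a a := by
  cases a with
  | none => trivial
  | some x => exact Or.inl rfl

lemma lle_trans : ∀ a b c : Lab, lle a b → lle b c → lle a c := by
  intro a b c hab hbc
  match a, b, c with
  | none, _, _ => trivial
  | some x, none, _ => exact hab.elim
  | some x, some y, none => exact hbc.elim
  | some x, some y, some z =>
    rcases hab with rfl | ⟨h1, h2, h3⟩
    · exact hbc
    · rcases hbc with rfl | ⟨h4, h5, h6⟩
      · exact Or.inr ⟨h1, h2, h3⟩
      · rw [h2] at h4; exact absurd h4 (by simp)

lemma lle_antisymm : ∀ a b : Lab, lle a b → lle b a → a = b := by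
  intro a b hab hba
  match a, b with
  | none, none => rfl
  | none, some y => exact hba.elim
  | some x, none => exact hab.elim
  | some x, some y =>
    rcases hab with rfl | ⟨h1, h2, h3⟩
    · rfl
    · rcases hba with rfl | ⟨h4, h5, h6⟩
      · rfl
      · rw [h2] at h4; exact absurd h4 (by simp)

theorem part2 : ¬ (∀ (W : Type) (le : W → W → Prop) (S : W → W) (V : W → Unit → Prop),
    (∀ w, le w w) → (∀ a b c, le a b → le b c → le a c) →
    (∀ a b, le a b → le b a → a = b) →
    (∀ a b, le a b → ∀ q, V a q → V b q) →
    (∀ a b, le a b → le (S a) (S b)) →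
    (∀ a b, le (S a) b → ∃ u, le a u ∧ S u = b) →
    ∀ w, sat le S V (Fml.impl (Fml.neg (Fml.neg (Fml.dia (Fml.box (Fml.var ())))))
                (Fml.dia (Fml.neg (Fml.neg (Fml.box (Fml.var ())))))) w) := by
  intro hval
  have hrefl : ∀ w : Lab × ℕ, le0 w w := fun w => ⟨rfl, lle_refl w.1⟩
  have hsat := hval (Lab × ℕ) le0 S0 V0 hrefl
    (fun a b c hab hbc => ⟨hab.1.trans hbc.1, lle_trans _ _ _ hab.2 hbc.2⟩)
    (fun a b hab hba => Prod.ext (lle_antisymm _ _ hab.2 hba.2) hab.1)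
    (by
      rintro a b ⟨ht, hl⟩ q ⟨m, hm, hmle⟩
      rw [hm] at hl
      match hb : b.1 with
      | none => rw [hb] at hl; exact hl.elim
      | some y =>
        rw [hb] at hl
        rcases hl with hl' | ⟨h1, _, _⟩
        · exact ⟨m, by rw [hb, ← hl'], ht ▸ hmle⟩
        · simp at h1)
    (fun a b hab => ⟨by simp [S0, hab.1], hab.2⟩)
    (by
      rintro a b ⟨ht, hl⟩
      exact ⟨(b.1, a.2), ⟨rfl, hl⟩, Prod.ext rfl ht⟩)
    (none, 0)
  -- the label-raising function witnessing ◇□p above any label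
  have hyp : sat le0 S0 V0 (Fml.neg (Fml.neg (Fml.dia (Fml.box (Fml.var ()))))) (none, 0) := by
    intro x hx hnx
    set t : ℕ := (match x.1 with
      | some (true, m) => m
      | some (false, k) => k + 1
      | none => 0) with ht
    refine hnx (some (true, t), x.2) ⟨rfl, ?_⟩ ⟨t, ?_⟩
    · match hx1 : x.1 with
      | none => trivial
      | some (true, m) => rw [ht, hx1]; exact Or.inl rfl
      | some (false, k) => rw [ht, hx1]; exact Or.inr ⟨rfl, rfl, Nat.lt_succ_self k⟩
    · intro j
      rw [S0_iter, S0_iter]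
      exact ⟨t, rfl, by omega⟩
  obtain ⟨k, hk⟩ := hsat (none, 0) (hrefl _) hyp
  rw [S0_iter] at hk
  refine hk (some (false, 0 + k), 0 + k) ⟨rfl, trivial⟩ (fun uu hle hbox => ?_)
  obtain ⟨m, hm, hmle⟩ := hbox 0
  rw [S0_iter] at hm hmle
  simp only at hm hmle
  have hl := hle.2
  rw [hm] at hl
  simp only [lle] at hl
  rcases hl with hl' | ⟨_, _, h3⟩
  · exact absurd hl' (by simp)
  · have := hle.1
    simp only at this
    omega

/-- Validity over all persistent models. -/
def persistentValid (φ : Fml Unit) : Prop :=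
  ∀ (W : Type) (le : W → W → Prop) (S : W → W) (V : W → Unit → Prop),
    (∀ w, le w w) → (∀ a b c, le a b → le b c → le a c) →
    (∀ a b, le a b → le b a → a = b) →
    (∀ a b, le a b → ∀ q, V a q → V b q) →
    (∀ a b, le a b → le (S a) (S b)) →
    (∀ a b, le (S a) b → ∃ u, le a u ∧ S u = b) →
    ∀ w, sat le S V φ w

/-- Validity over all finite persistent models. -/
def finitePersistentValid (φ : Fml Unit) : Prop :=
  ∀ (W : Type) (le : W → W → Prop) (S : W → W) (V : W → Unit → Prop), Finite W →
    (∀ w, le w w) → (∀ a b c, le a b → le b c → le a c) →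
    (∀ a b, le a b → le b a → a = b) →
    (∀ a b, le a b → ∀ q, V a q → V b q) →
    (∀ a b, le a b → le (S a) (S b)) →
    (∀ a b, le (S a) b → ∃ u, le a u ∧ S u = b) →
    ∀ w, sat le S V φ w

/-- `ITL^p` lacks the finite model property: `¬¬◇□p → ◇¬¬□p` is valid on all
    finite persistent models but not on all persistent models. -/
theorem itlp_no_fmp :
    finitePersistentValid
      (Fml.impl (Fml.neg (Fml.neg (Fml.dia (Fml.box (Fml.var ())))))
                (Fml.dia (Fml.neg (Fml.neg (Fml.box (Fml.var ())))))) ∧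
    ¬ persistentValid
      (Fml.impl (Fml.neg (Fml.neg (Fml.dia (Fml.box (Fml.var ())))))
                (Fml.dia (Fml.neg (Fml.neg (Fml.box (Fml.var ())))))) := by
  exact ⟨part1, part2⟩
end

section
/- Let Σ be a set of intuitionistic formulas closed under subformulas, M = (W,≼,S,V) an intuitionistic dynamic model, and A = (W_A, ≼_A, λ) a 2^Σ-labeled poset. If there is a condensation (ρ,ι) from M^Σ to A (where M^Σ labels each world w by Σ(w) = {ψ ∈ Σ : M,w ⊨ ψ}), then A is a Σ-quasimodel: λ is monotone, and for each φ→ψ ∈ Σ and w ∈ W_A, φ→ψ ∈ λ(w) iff for all v ≽_A w, φ ∈ λ(v) implies ψ ∈ λ(v). -/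
/-- Closure under subformulas. -/
def Closed {P : Type} (Sg : Set (Fml P)) : Prop :=
  (∀ φ ψ, Fml.and φ ψ ∈ Sg → φ ∈ Sg ∧ ψ ∈ Sg) ∧
  (∀ φ ψ, Fml.or φ ψ ∈ Sg → φ ∈ Sg ∧ ψ ∈ Sg) ∧
  (∀ φ ψ, Fml.impl φ ψ ∈ Sg → φ ∈ Sg ∧ ψ ∈ Sg) ∧
  (∀ φ, Fml.next φ ∈ Sg → φ ∈ Sg) ∧
  (∀ φ, Fml.dia φ ∈ Sg → φ ∈ Sg) ∧
  (∀ φ, Fml.box φ ∈ Sg → φ ∈ Sg)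

theorem sat_mono {P W : Type}
    (le : W → W → Prop) (S : W → W) (V : W → P → Prop)
    (htrans : ∀ a b c, le a b → le b c → le a c)
    (hV : ∀ w v, le w v → ∀ q, V w q → V v q)
    (hfc : ∀ a b, le a b → le (S a) (S b))
    (φ : Fml P) : ∀ w v, le w v → sat le S V φ w → sat le S V φ v := by
  have hiter : ∀ (k : ℕ) w v, le w v → le (S^[k] w) (S^[k] v) := by
    intro k
    induction k with
    | zero => intro w v h; simpa using h
    | succ n ih =>
      intro w v h
      rw [Function.iterate_succ_apply', Function.iterate_succ_apply']
      exact hfc _ _ (ih w v h)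
  induction φ with
  | var p => intro w v h hs; exact hV w v h p hs
  | bot => intro w v _ hs; exact hs
  | and φ ψ ihφ ihψ => intro w v h hs; exact ⟨ihφ w v h hs.1, ihψ w v h hs.2⟩
  | or φ ψ ihφ ihψ =>
    intro w v h hs
    rcases hs with hs | hs
    · exact Or.inl (ihφ w v h hs)
    · exact Or.inr (ihψ w v h hs)
  | impl φ ψ ihφ ihψ =>
    intro w v h hs u hvu hφ
    exact hs u (htrans _ _ _ h hvu) hφ
  | next φ ih => intro w v h hs; exact ih _ _ (hfc _ _ h) hs
  | dia φ ih =>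
    intro w v h hs
    obtain ⟨k, hk⟩ := hs
    exact ⟨k, ih _ _ (hiter k w v h) hk⟩
  | box φ ih =>
    intro w v h hs k
    exact ih _ _ (hiter k w v h) (hs k)

/-- If a `2^Σ`-labeled poset `A` admits a condensation `(ρ, ι)` from `M^Σ`,
    then `A` is a `Σ`-quasimodel. -/
theorem condensation_quasimodel {P W A : Type}
    (le : W → W → Prop) (S : W → W) (V : W → P → Prop)
    (hrefl : ∀ w, le w w)
    (htrans : ∀ a b c, le a b → le b c → le a c)
    (hantisymm : ∀ a b, le a b → le b a → a = b)
    (hV : ∀ w v, le w v → ∀ q, V w q → V v q)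
    (hfc : ∀ a b, le a b → le (S a) (S b))
    (Sg : Set (Fml P)) (hcl : Closed Sg)
    (leA : A → A → Prop)
    (hreflA : ∀ a, leA a a)
    (htransA : ∀ a b c, leA a b → leA b c → leA a c)
    (hantisymmA : ∀ a b, leA a b → leA b a → a = b)
    (lab : A → Set (Fml P))
    (ρ : W → A) (ι : A → W)
    -- ρ is an immersion from M^Σ to A
    (hρlab : ∀ w : W, lab (ρ w) = {ψ | ψ ∈ Sg ∧ sat le S V ψ w})
    (hρmono : ∀ w v : W, le w v → leA (ρ w) (ρ v))
    -- ι is an immersion from A to M^Σ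
    (hιlab : ∀ a : A, {ψ | ψ ∈ Sg ∧ sat le S V ψ (ι a)} = lab a)
    (hιmono : ∀ a b : A, leA a b → le (ι a) (ι b))
    (hsurj : Function.Surjective ρ)
    (hid : ∀ a, ρ (ι a) = a) :
    (∀ a b : A, leA a b → lab a ⊆ lab b) ∧
    (∀ φ ψ, Fml.impl φ ψ ∈ Sg → ∀ a : A,
      (Fml.impl φ ψ ∈ lab a ↔ ∀ b, leA a b → φ ∈ lab b → ψ ∈ lab b)) := by
  have mono := sat_mono le S V htrans hV hfc
  constructor
  · intro a b hab ψ hψ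
    rw [← hιlab a] at hψ
    rw [← hιlab b]
    exact ⟨hψ.1, mono ψ _ _ (hιmono a b hab) hψ.2⟩
  · intro φ ψ hmem a
    constructor
    · intro h b hab hφ
      rw [← hιlab a] at h
      rw [← hιlab b] at hφ ⊢
      exact ⟨(hcl.2.2.1 φ ψ hmem).2, h.2 (ι b) (hιmono a b hab) hφ.2⟩
    · intro h
      rw [← hιlab a]
      refine ⟨hmem, ?_⟩
      intro v hv hφ
      have hab : leA a (ρ v) := by
        have := hρmono (ι a) v hv
        rwa [hid a] at this
      have hφb : φ ∈ lab (ρ v) := by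
        rw [hρlab v]; exact ⟨(hcl.2.2.1 φ ψ hmem).1, hφ⟩
      have := h (ρ v) hab hφb
      rw [hρlab v] at this
      exact this.2
end

section
/- Given a finite label set Λ of cardinality n and a sequence T_1, …, T_m of Λ-labeled trees of level at most k with m > E(n,k), there are indices i < j ≤ m such that T_i and T_j are bimersive (there exist immersions in both directions). -/
def Efn : ℕ → ℕ → ℕ
  | _, 0 => 0
  | n, (k+1) => Efn n k + n * 2 ^ (Efn n k)

/-- A `Λ`-labeled tree: a poset with a root below everything, whose principal
    downsets are linearly ordered, with a labeling of the nodes. -/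
structure LTree (Λ : Type) where
  W : Type
  le : W → W → Prop
  refl : ∀ w, le w w
  trans : ∀ a b c, le a b → le b c → le a c
  antisymm : ∀ a b, le a b → le b a → a = b
  lab : W → Λ
  root : W
  root_le : ∀ w, le root w
  lin : ∀ w u v, le u w → le v w → le u v ∨ le v u

/-- `A` has level at most `k`: every proper increasing chain (strictly
    increasing, with consecutive labels distinct) has length at most `k`. -/
def LevelLe {Λ : Type} (A : LTree Λ) (k : ℕ) : Prop :=
  ∀ l : List A.W,
    l.Chain' (fun a b => (A.le a b ∧ ¬ A.le b a) ∧ A.lab a ≠ A.lab b) →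
    l.length ≤ k

/-- An immersion: a label-preserving, order-preserving function. -/
def Immersion {Λ : Type} (A B : LTree Λ) : Prop :=
  ∃ f : A.W → B.W,
    (∀ a, A.lab a = B.lab (f a)) ∧ ∀ a a', A.le a a' → B.le (f a) (f a')

namespace PH

variable {Λ : Type}

structure DT (Λ : Type) where
  W : Type
  le : W → W → Prop
  refl : ∀ w, le w w
  trans : ∀ a b c, le a b → le b c → le a c
  antisymm : ∀ a b, le a b → le b a → a = b
  lab : W → Λ
  ne : Nonempty W
  dir : ∀ x y : W, ∃ z, le z x ∧ le z y
  lin : ∀ w u v, le u w → le v w → le u v ∨ le v u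

def Proper (A : DT Λ) (a b : A.W) : Prop :=
  (A.le a b ∧ ¬ A.le b a) ∧ A.lab a ≠ A.lab b

def Lev (A : DT Λ) (k : ℕ) : Prop :=
  ∀ l : List A.W, l.Chain' (Proper A) → l.length ≤ k

def Pure (A : DT Λ) (x : A.W) : Prop := ∀ z, A.le z x → A.lab z = A.lab x

lemma descend_aux (A : DT Λ) :
    ∀ (j : ℕ) (x : A.W), (∀ y, A.le y x → ¬ Pure A y) →
      ∃ l : List A.W, (l ++ [x]).Chain' (Proper A) ∧ l.length = j
  | 0, x, _ => ⟨[], List.isChain_singleton _, rfl⟩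
  | (j+1), x, hx => by
      have hnp : ¬ Pure A x := hx x (A.refl x)
      have hz : ∃ z, A.le z x ∧ A.lab z ≠ A.lab x := by
        by_contra h; push_neg at h; exact hnp (fun z hz => h z hz)
      obtain ⟨z, hzx, hlab⟩ := hz
      obtain ⟨l, hl, hlen⟩ := descend_aux A j z (fun y hy => hx y (A.trans _ _ _ hy hzx))
      refine ⟨l ++ [z], ?_, by simp [hlen]⟩
      rw [List.append_assoc]
      unfold List.Chain' at hl ⊢
      rw [List.isChain_append] at hl ⊢
      refine ⟨hl.1, ?_, ?_⟩
      · simp only [List.singleton_append]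
        rw [List.isChain_cons_cons]
        refine ⟨⟨⟨hzx, fun h => hlab ?_⟩, hlab⟩, List.isChain_singleton _⟩
        · rw [A.antisymm z x hzx h]
      · intro a ha b hb
        simp only [List.singleton_append, List.head?_cons, Option.mem_some_iff] at hb
        subst hb
        exact hl.2.2 a ha z (by simp)

lemma pure_below (A : DT Λ) {k : ℕ} (h : Lev A k) (x : A.W) :
    ∃ y, A.le y x ∧ Pure A y := by
  by_contra hc
  push_neg at hc
  obtain ⟨l, hl, hlen⟩ := descend_aux A k x (fun y hy hp => hc y hy hp)
  have := h _ hl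
  simp [hlen] at this

lemma pure_ex (A : DT Λ) {k : ℕ} (h : Lev A k) : ∃ y, Pure A y :=
  let x := Classical.choice A.ne
  ⟨(pure_below A h x).choose, (pure_below A h x).choose_spec.2⟩

lemma pure_lab_eq (A : DT Λ) {x y : A.W} (hx : Pure A x) (hy : Pure A y) :
    A.lab x = A.lab y := by
  obtain ⟨z, hzx, hzy⟩ := A.dir x y
  rw [← hx z hzx, ← hy z hzy]

noncomputable def gm (A : DT Λ) (hp : ∃ y, Pure A y) : Λ := A.lab hp.choose

lemma gm_spec (A : DT Λ) (hp : ∃ y, Pure A y) :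
    ∀ y, Pure A y → A.lab y = gm A hp :=
  fun _ hy => pure_lab_eq A hy hp.choose_spec

/-- `y` is in the branch-class determined by the high point `x` (relative to germ label `c`). -/
def ClP (A : DT Λ) (c : Λ) (x : A.W) (y : A.W) : Prop :=
  ∃ u, A.le u x ∧ A.le u y ∧ A.lab u ≠ c

def High (A : DT Λ) (c : Λ) (x : A.W) : Prop := ∃ u, A.le u x ∧ A.lab u ≠ c

lemma clp_self {A : DT Λ} {c : Λ} {x : A.W} (hx : High A c x) : ClP A c x x :=
  let ⟨u, h1, h2⟩ := hx; ⟨u, h1, h1, h2⟩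

lemma clp_symm {A : DT Λ} {c : Λ} {x y : A.W} (h : ClP A c x y) : ClP A c y x :=
  let ⟨u, h1, h2, h3⟩ := h; ⟨u, h2, h1, h3⟩

lemma clp_trans {A : DT Λ} {c : Λ} {x y z : A.W} (h1 : ClP A c x y) (h2 : ClP A c y z) :
    ClP A c x z := by
  obtain ⟨u, hux, huy, hu⟩ := h1
  obtain ⟨v, hvy, hvz, hv⟩ := h2
  rcases A.lin y u v huy hvy with h | h
  · exact ⟨u, hux, A.trans _ _ _ h hvz, hu⟩
  · exact ⟨v, A.trans _ _ _ h hux, hvz, hv⟩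

lemma clp_eq {A : DT Λ} {c : Λ} {x y : A.W} (h : ClP A c x y) : ClP A c x = ClP A c y := by
  funext z
  exact propext ⟨fun hz => clp_trans (clp_symm h) hz, fun hz => clp_trans h hz⟩

lemma clp_dir (A : DT Λ) (c : Λ) (x : A.W) :
    ∀ y y', ClP A c x y → ClP A c x y' → ∃ z, ClP A c x z ∧ A.le z y ∧ A.le z y' := by
  rintro y y' ⟨u, hux, huy, hu⟩ ⟨v, hvx, hvy', hv⟩
  rcases A.lin x u v hux hvx with h | h
  · exact ⟨u, ⟨u, hux, A.refl u, hu⟩, huy, A.trans _ _ _ h hvy'⟩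
  · exact ⟨v, ⟨v, hvx, A.refl v, hv⟩, A.trans _ _ _ h huy, hvy'⟩

def SubT (A : DT Λ) (p : A.W → Prop) (hne : ∃ y, p y)
    (hdir : ∀ y y', p y → p y' → ∃ z, p z ∧ A.le z y ∧ A.le z y') : DT Λ where
  W := {y // p y}
  le a b := A.le a.1 b.1
  refl a := A.refl a.1
  trans a b c h1 h2 := A.trans _ _ _ h1 h2
  antisymm a b h1 h2 := Subtype.ext (A.antisymm _ _ h1 h2)
  lab a := A.lab a.1
  ne := ⟨⟨hne.choose, hne.choose_spec⟩⟩
  dir a b := by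
    obtain ⟨z, hz, h1, h2⟩ := hdir a.1 b.1 a.2 b.2
    exact ⟨⟨z, hz⟩, h1, h2⟩
  lin w u v h1 h2 := A.lin w.1 u.1 v.1 h1 h2

noncomputable def clT (A : DT Λ) (c : Λ) (x : A.W) (hx : High A c x) : DT Λ :=
  SubT A (ClP A c x) ⟨x, clp_self hx⟩ (clp_dir A c x)

lemma clT_lev (A : DT Λ) (c : Λ) {k : ℕ} (h : Lev A (k+1))
    (hpb : ∀ x : A.W, ∃ y, A.le y x ∧ Pure A y)
    (hc : ∀ y, Pure A y → A.lab y = c)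
    (x : A.W) (hx : High A c x) : Lev (clT A c x hx) k := by
  intro l hl
  rcases l with _ | ⟨a, l'⟩
  · simp
  · have hm : ((a :: l').map Subtype.val).Chain' (Proper A) :=
      (List.isChain_map _).mpr (hl.imp (fun a b hab => hab))
    obtain ⟨u, hux, hua, hu⟩ := a.2
    obtain ⟨y, hyu, hy⟩ := hpb u
    have hylab : A.lab y = c := hc y hy
    by_cases hla : A.lab a.1 = c
    · -- prepend y, u
      have hP1 : Proper A y u := by
        refine ⟨⟨hyu, fun hh => hu ?_⟩, fun hh => hu (by rw [← hh, hylab])⟩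
        rw [A.antisymm u y hh hyu, hylab]
      have hP2 : Proper A u a.1 := by
        refine ⟨⟨hua, fun hh => hu ?_⟩, fun hh => hu (by rw [hh, hla])⟩
        rw [A.antisymm u a.1 hua hh, hla]
      have hchain : (y :: u :: (a :: l').map Subtype.val).Chain' (Proper A) := by
        show List.IsChain (Proper A) (y :: u :: a.1 :: l'.map Subtype.val)
        rw [List.isChain_cons_cons, List.isChain_cons_cons]
        exact ⟨hP1, hP2, hm⟩
      have := h _ hchain
      have hlm : ((a :: l').map Subtype.val).length = l'.length + 1 := by exact List.length_map _
      simp at this ⊢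
      omega
    · -- prepend y only
      have hchain : (y :: (a :: l').map Subtype.val).Chain' (Proper A) := by
        show List.IsChain (Proper A) (y :: a.1 :: l'.map Subtype.val)
        rw [List.isChain_cons_cons]
        refine ⟨⟨⟨A.trans _ _ _ hyu hua, fun hh => hla ?_⟩, fun hh => hla (by rw [← hh, hylab])⟩, hm⟩
        · rw [A.antisymm y a.1 (A.trans _ _ _ hyu hua) hh] at hylab; exact hylab
      have := h _ hchain
      have hlm : ((a :: l').map Subtype.val).length = l'.length + 1 := by exact List.length_map _
      simp at this ⊢
      omega

lemma pure_le_cl (A : DT Λ) (c : Λ) (x : A.W) (hc : ∀ y, Pure A y → A.lab y = c)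
    {u y : A.W} (hux : A.le u x) (hu : A.lab u ≠ c) (hyu : A.le y u) (hy : Pure A y) :
    ∀ z, ClP A c x z → A.le y z := by
  rintro z ⟨w, hwx, hwz, hw⟩
  rcases A.lin x u w hux hwx with h | h
  · exact A.trans _ _ _ (A.trans _ _ _ hyu h) hwz
  · rcases A.lin u w y h hyu with h2 | h2
    · exact absurd (by rw [hy w h2, hc y hy]) hw
    · exact A.trans _ _ _ h2 hwz

lemma not_high {A : DT Λ} {c : Λ} {a : A.W} (h : ¬ High A c a) : A.lab a = c := by
  by_contra hne
  exact h ⟨a, A.refl a, hne⟩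

lemma high_mono {A : DT Λ} {c : Λ} {a a' : A.W} (h : High A c a) (hle : A.le a a') :
    High A c a' := by
  obtain ⟨u, hua, hu⟩ := h
  exact ⟨u, A.trans _ _ _ hua hle, hu⟩

def Sk (Λ : Type) : ℕ → Type
  | 0 => Empty
  | (k+1) => Λ × Finset (Sk Λ k)

noncomputable instance skFT [Fintype Λ] : ∀ k, Fintype (Sk Λ k)
  | 0 => inferInstanceAs (Fintype Empty)
  | (k+1) => by
      letI := skFT k
      exact inferInstanceAs (Fintype (Λ × Finset (Sk Λ k)))

lemma card_Sk [Fintype Λ] (n : ℕ) (hn : Fintype.card Λ = n) :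
    ∀ k, Fintype.card (Sk Λ k) ≤ Efn n k
  | 0 => by
      have : Fintype.card (Sk Λ 0) = 0 := by
        rw [Fintype.card_eq_zero_iff]
        exact ⟨fun x => (show Empty from x).elim⟩
      simp [this, Efn]
  | (k+1) => by
      have h1 : Fintype.card (Sk Λ (k+1)) = Fintype.card (Λ × Finset (Sk Λ k)) :=
        Fintype.card_congr (Equiv.refl _)
      have h2 : Fintype.card (Λ × Finset (Sk Λ k)) = n * 2 ^ (Fintype.card (Sk Λ k)) := by
        rw [Fintype.card_prod, Fintype.card_finset, hn]
      have h3 := card_Sk n hn k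
      have : n * 2 ^ (Fintype.card (Sk Λ k)) ≤ n * 2 ^ (Efn n k) :=
        Nat.mul_le_mul_left n (Nat.pow_le_pow_right (by norm_num) h3)
      calc Fintype.card (Sk Λ (k+1)) = n * 2 ^ (Fintype.card (Sk Λ k)) := by rw [h1, h2]
        _ ≤ n * 2 ^ (Efn n k) := this
        _ ≤ Efn n k + n * 2 ^ (Efn n k) := Nat.le_add_left _ _
        _ = Efn n (k+1) := rfl

noncomputable def inv [Fintype Λ] : (k : ℕ) → (A : DT Λ) → Lev A k → Sk Λ k
  | 0, A, h => absurd (h [Classical.choice A.ne] (List.isChain_singleton _)) (by simp)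
  | (k+1), A, h =>
      (gm A (pure_ex A h),
        @Finset.filter _
          (fun t => ∃ (x : A.W) (hx : High A (gm A (pure_ex A h)) x),
            t = inv k (clT A (gm A (pure_ex A h)) x hx)
                 (clT_lev A (gm A (pure_ex A h)) h (pure_below A h)
                   (gm_spec A (pure_ex A h)) x hx))
          (fun _ => Classical.propDecidable _) Finset.univ)

lemma inv_fst [Fintype Λ] {k : ℕ} (A : DT Λ) (h : Lev A (k+1)) :
    (inv (k+1) A h).1 = gm A (pure_ex A h) := by
  simp only [inv]

lemma mem_inv_snd [Fintype Λ] {k : ℕ} (A : DT Λ) (h : Lev A (k+1)) (t : Sk Λ k) :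
    t ∈ (inv (k+1) A h).2 ↔
      ∃ (x : A.W) (hx : High A (gm A (pure_ex A h)) x),
        t = inv k (clT A (gm A (pure_ex A h)) x hx)
             (clT_lev A (gm A (pure_ex A h)) h (pure_below A h)
               (gm_spec A (pure_ex A h)) x hx) := by
  classical
  simp only [inv]
  rw [Finset.mem_filter]
  simp

lemma main [Fintype Λ] (k : ℕ) :
    ∀ (U V : DT Λ) (hU : Lev U k) (hV : Lev V k),
      inv k U hU = inv k V hV →
      ∃ f : U.W → V.W, (∀ a, U.lab a = V.lab (f a)) ∧
        ∀ a a', U.le a a' → V.le (f a) (f a') := by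
  induction k with
  | zero =>
      intro U V hU _ _
      exact absurd (hU [Classical.choice U.ne] (List.isChain_singleton _)) (by simp)
  | succ k IH =>
      intro U V hU hV heq
      classical
      set cU := gm U (pure_ex U hU) with hcUdef
      set cV := gm V (pure_ex V hV) with hcVdef
      have hc : cU = cV := by
        rw [hcUdef, hcVdef, ← inv_fst U hU, ← inv_fst V hV, heq]
      have hsets : ∀ t, t ∈ (inv (k+1) U hU).2 ↔ t ∈ (inv (k+1) V hV).2 :=
        fun t => by rw [heq]
      have hcU : ∀ y, Pure U y → U.lab y = cU := gm_spec U (pure_ex U hU)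
      have hcV : ∀ y, Pure V y → V.lab y = cV := gm_spec V (pure_ex V hV)
      have hpbU := pure_below U hU
      have hpbV := pure_below V hV
      have hpad : ∀ ι : Sk Λ k, ∃ x : V.W,
          ι ∈ (inv (k+1) V hV).2 →
          ∃ hx : High V cV x, inv k (clT V cV x hx)
              (clT_lev V cV hV hpbV hcV x hx) = ι := by
        intro ι
        by_cases hι : ι ∈ (inv (k+1) V hV).2
        · obtain ⟨x, hx, ht⟩ := (mem_inv_snd V hV ι).mp hι
          exact ⟨x, fun _ => ⟨hx, ht.symm⟩⟩
        · exact ⟨Classical.choice V.ne, fun h => absurd h hι⟩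
      choose vx hvx using hpad
      have hyselh : ∀ ι : Sk Λ k, ∃ y : V.W, Pure V y ∧
          (ι ∈ (inv (k+1) V hV).2 → ∀ z, ClP V cV (vx ι) z → V.le y z) := by
        intro ι
        by_cases hι : ι ∈ (inv (k+1) V hV).2
        · obtain ⟨hx, -⟩ := hvx ι hι
          obtain ⟨u, hux, hu⟩ := hx
          obtain ⟨y, hyu, hy⟩ := hpbV u
          exact ⟨y, hy, fun _ => pure_le_cl V cV (vx ι) hcV hux hu hyu hy⟩
        · obtain ⟨y, -, hy⟩ := hpbV (Classical.choice V.ne)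
          exact ⟨y, hy, fun h => absurd h hι⟩
      choose ysel hysel1 hysel2 using hyselh
      have hstar : ∀ s : Finset (Sk Λ k), ∃ y, Pure V y ∧ ∀ ι ∈ s, V.le y (ysel ι) := by
        intro s
        induction s using Finset.induction_on with
        | empty =>
            obtain ⟨y, -, hy⟩ := hpbV (Classical.choice V.ne)
            exact ⟨y, hy, by simp⟩
        | @insert ι0 s hni ih =>
            obtain ⟨y0, hy0, hbd⟩ := ih
            obtain ⟨z, hz1, hz2⟩ := V.dir y0 (ysel ι0)
            obtain ⟨y1, hy1z, hy1⟩ := hpbV z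
            refine ⟨y1, hy1, ?_⟩
            intro ι hι
            rcases Finset.mem_insert.mp hι with rfl | hι
            · exact V.trans _ _ _ hy1z hz2
            · exact V.trans _ _ _ (V.trans _ _ _ hy1z hz1) (hbd ι hι)
      obtain ⟨ystar, hystarp, hystarle'⟩ := hstar Finset.univ
      have hystarle : ∀ ι : Sk Λ k, V.le ystar (ysel ι) :=
        fun ι => hystarle' ι (Finset.mem_univ ι)
      have key : ∀ p : U.W → Prop, ∃ g : U.W → V.W,
          ∀ (x : U.W), High U cU x → p = ClP U cU x →
            (∀ a, p a → U.lab a = V.lab (g a)) ∧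
            (∀ a a', p a → p a' → U.le a a' → V.le (g a) (g a')) ∧
            (∀ a, p a → V.le ystar (g a)) := by
        intro p
        by_cases hp : ∃ x : U.W, High U cU x ∧ p = ClP U cU x
        · obtain ⟨x, hx, rfl⟩ := hp
          set ι := inv k (clT U cU x hx) (clT_lev U cU hU hpbU hcU x hx) with hιdef
          have hmemU : ι ∈ (inv (k+1) U hU).2 := (mem_inv_snd U hU ι).mpr ⟨x, hx, rfl⟩
          have hmemV : ι ∈ (inv (k+1) V hV).2 := (hsets ι).mp hmemU
          obtain ⟨hxv, hinvv⟩ := hvx ι hmemV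
          obtain ⟨σ, hσlab, hσle⟩ := IH (clT U cU x hx) (clT V cV (vx ι) hxv)
            (clT_lev U cU hU hpbU hcU x hx) (clT_lev V cV hV hpbV hcV (vx ι) hxv)
            hinvv.symm
          refine ⟨fun a => if ha : ClP U cU x a then (σ ⟨a, ha⟩).1 else ystar,
            fun x' hx' hpe => ⟨?_, ?_, ?_⟩⟩
          · intro a ha
            simp only [dif_pos ha]
            exact hσlab ⟨a, ha⟩
          · intro a a' ha ha' hle
            simp only [dif_pos ha, dif_pos ha']
            exact hσle ⟨a, ha⟩ ⟨a', ha'⟩ hle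
          · intro a ha
            simp only [dif_pos ha]
            exact V.trans _ _ _ (hystarle ι) (hysel2 ι hmemV _ (σ ⟨a, ha⟩).2)
        · exact ⟨fun _ => ystar, fun x hx hpe => absurd ⟨x, hx, hpe⟩ hp⟩
      choose g hg using key
      refine ⟨fun a => if ha : High U cU a then g (ClP U cU a) a else ystar, ?_, ?_⟩
      · intro a
        by_cases ha : High U cU a
        · simp only [dif_pos ha]
          exact (hg (ClP U cU a) a ha rfl).1 a (clp_self ha)
        · simp only [dif_neg ha]
          rw [not_high ha, hc, ← hcV ystar hystarp]
      · intro a a' hle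
        by_cases ha : High U cU a
        · have ha' : High U cU a' := high_mono ha hle
          have hcl : ClP U cU a a' := by
            obtain ⟨u, hua, hu⟩ := ha
            exact ⟨u, hua, U.trans _ _ _ hua hle, hu⟩
          have hpe : ClP U cU a = ClP U cU a' := clp_eq hcl
          simp only [dif_pos ha, dif_pos ha']
          rw [← hpe]
          exact (hg (ClP U cU a) a ha rfl).2.1 a a' (clp_self ha) hcl hle
        · by_cases ha' : High U cU a'
          · simp only [dif_pos ha', dif_neg ha]
            exact (hg (ClP U cU a') a' ha' rfl).2.2 a' (clp_self ha')
          · simp only [dif_neg ha, dif_neg ha']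
            exact V.refl ystar

end PH

/-- Among more than `Efn n k` labeled trees of level at most `k` over an
    `n`-element label set, two are bimersive. -/
theorem pigeonhole_bimersion {Λ : Type} [Fintype Λ] (n k m : ℕ)
    (hn : Fintype.card Λ = n)
    (T : Fin m → LTree Λ) (hlev : ∀ i, LevelLe (T i) k) (hm : m > Efn n k) :
    ∃ i j : Fin m, i < j ∧ Immersion (T i) (T j) ∧ Immersion (T j) (T i) := by
  classical
  let D : Fin m → PH.DT Λ := fun i =>
    { W := (T i).W, le := (T i).le, refl := (T i).refl, trans := (T i).trans,
      antisymm := (T i).antisymm, lab := (T i).lab, ne := ⟨(T i).root⟩,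
      dir := fun x y => ⟨(T i).root, (T i).root_le x, (T i).root_le y⟩,
      lin := (T i).lin }
  have hlev' : ∀ i, PH.Lev (D i) k := fun i l hl => hlev i l hl
  have hcard : Fintype.card (PH.Sk Λ k) < Fintype.card (Fin m) := by
    rw [Fintype.card_fin]
    exact lt_of_le_of_lt (PH.card_Sk n hn k) hm
  obtain ⟨i, j, hne, hfeq⟩ := Fintype.exists_ne_map_eq_of_card_lt
    (fun i => PH.inv k (D i) (hlev' i)) hcard
  have himm : ∀ i j : Fin m, PH.inv k (D i) (hlev' i) = PH.inv k (D j) (hlev' j) →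
      Immersion (T i) (T j) := by
    intro i j h
    obtain ⟨f, h1, h2⟩ := PH.main k (D i) (D j) (hlev' i) (hlev' j) h
    exact ⟨f, h1, h2⟩
  rcases lt_or_gt_of_ne hne with h | h
  · exact ⟨i, j, h, himm i j hfeq, himm j i hfeq.symm⟩
  · exact ⟨j, i, h, himm j i hfeq.symm, himm i j hfeq⟩
end
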